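/- For every binary matrix P and all positive integers n, s, t with s ≤ t, the inequality m(tn,P) ≤ m(s−1,P)·m(n,P) + m(t,P)·f_P(t,s)·n + m(t,P)·g_P(t,s)·n holds (as an inequality of extended natural numbers, with m(0,P) := 0). -/

import Mathlib

open Filter

/-- A binary matrix `A` contains a binary matrix `P` (as a submatrix pattern):
there are strictly increasing choices of rows and columns such that `A` has a
one wherever `P` does. -/
def ContainsMat {k l m n : ℕ} (P : Fin k → Fin l → Bool) (A : Fin m → Fin n → Bool) : Prop :=
  ∃ (r : Fin k → Fin m) (c : Fin l → Fin n), StrictMono r ∧ StrictMono c ∧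
    ∀ i j, P i j = true → A (r i) (c j) = true

/-- The permutation matrix of a permutation of `{1,…,k}`. -/
def permMatrix {k : ℕ} (π : Equiv.Perm (Fin k)) : Fin k → Fin k → Bool :=
  fun i j => decide (π i = j)

/-- The mass of a binary matrix: the number of its one-entries. -/
def mass {m n : ℕ} (A : Fin m → Fin n → Bool) : ℕ :=
  (Finset.univ.filter fun p : Fin m × Fin n => A p.1 p.2 = true).card

/-- A binary matrix avoids a permutation if it avoids its permutation matrix. -/
def AvoidsPerm {k m n : ℕ} (A : Fin m → Fin n → Bool) (π : Equiv.Perm (Fin k)) : Prop :=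
  ¬ ContainsMat (permMatrix π) A

/-- `ex n π`: the maximum mass of an `n × n` binary matrix avoiding `π`. -/
noncomputable def exP {k : ℕ} (n : ℕ) (π : Equiv.Perm (Fin k)) : ℕ :=
  sSup {m | ∃ A : Fin n → Fin n → Bool, AvoidsPerm A π ∧ mass A = m}

/-- `ex n U` for a set `U` of permutations: the maximum mass of an `n × n`
binary matrix avoiding every permutation in `U`. -/
noncomputable def exU {k : ℕ} (n : ℕ) (U : Finset (Equiv.Perm (Fin k))) : ℕ :=
  sSup {m | ∃ A : Fin n → Fin n → Bool, (∀ π ∈ U, AvoidsPerm A π) ∧ mass A = m}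

/-- An `n`-permutation `σ` contains a `k`-permutation `π`. -/
def PermContains {n k : ℕ} (σ : Equiv.Perm (Fin n)) (π : Equiv.Perm (Fin k)) : Prop :=
  ∃ x : Fin k → Fin n, StrictMono x ∧ ∀ i j, σ (x i) < σ (x j) ↔ π i < π j

/-- `S n π`: the number of `n`-permutations avoiding `π`. -/
noncomputable def SP {k : ℕ} (n : ℕ) (π : Equiv.Perm (Fin k)) : ℕ :=
  Nat.card {σ : Equiv.Perm (Fin n) // ¬ PermContains σ π}

/-- `S n U`: the number of `n`-permutations avoiding every permutation in `U`. -/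
noncomputable def SU {k : ℕ} (n : ℕ) (U : Finset (Equiv.Perm (Fin k))) : ℕ :=
  Nat.card {σ : Equiv.Perm (Fin n) // ∀ π ∈ U, ¬ PermContains σ π}

/-- `T n π`: the number of `n × n` binary matrices avoiding `π`. -/
noncomputable def TP {k : ℕ} (n : ℕ) (π : Equiv.Perm (Fin k)) : ℕ :=
  Nat.card {A : Fin n → Fin n → Bool // AvoidsPerm A π}

/-- `P` is an interval minor of `A`: there are ordered disjoint row intervals
`[rlo a, rhi a]` and column intervals `[clo b, chi b]` such that wherever `P`
has a one, the corresponding block of `A` contains a one. -/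
def IntervalMinor {k l m n : ℕ} (P : Fin k → Fin l → Bool) (A : Fin m → Fin n → Bool) : Prop :=
  ∃ (rlo rhi : Fin k → Fin m) (clo chi : Fin l → Fin n),
    (∀ a, rlo a ≤ rhi a) ∧ (∀ a b, a < b → rhi a < rlo b) ∧
    (∀ a, clo a ≤ chi a) ∧ (∀ a b, a < b → chi a < clo b) ∧
    ∀ a b, P a b = true → ∃ i j, rlo a ≤ i ∧ i ≤ rhi a ∧ clo b ≤ j ∧ j ≤ chi b ∧ A i j = true

/-- The all-ones `k × l` binary matrix. -/
def J (k l : ℕ) : Fin k → Fin l → Bool := fun _ _ => true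

/-- `m n P`: the maximum mass of an `n × n` binary matrix avoiding `P` as an
interval minor. -/
noncomputable def mP {k l : ℕ} (n : ℕ) (P : Fin k → Fin l → Bool) : ℕ :=
  sSup {m | ∃ A : Fin n → Fin n → Bool, ¬ IntervalMinor P A ∧ mass A = m}

/-- `f_P(t,s)`: the supremum (in `ℕ∞`) of those `N` for which there is an
`N × t` binary matrix with at least `s` ones in each row avoiding `P` as an
interval minor. -/
noncomputable def fP {k l : ℕ} (P : Fin k → Fin l → Bool) (t s : ℕ) : ℕ∞ :=
  sSup {x : ℕ∞ | ∃ N : ℕ, x = (N : ℕ∞) ∧ ∃ A : Fin N → Fin t → Bool,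
    (∀ i, s ≤ (Finset.univ.filter fun j => A i j = true).card) ∧ ¬ IntervalMinor P A}

/-- `g_P(t,s)`: the supremum (in `ℕ∞`) of those `N` for which there is a
`t × N` binary matrix with at least `s` ones in each column avoiding `P` as an
interval minor. -/
noncomputable def gP {k l : ℕ} (P : Fin k → Fin l → Bool) (t s : ℕ) : ℕ∞ :=
  sSup {x : ℕ∞ | ∃ N : ℕ, x = (N : ℕ∞) ∧ ∃ A : Fin t → Fin N → Bool,
    (∀ j, s ≤ (Finset.univ.filter fun i => A i j = true).card) ∧ ¬ IntervalMinor P A}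

section AuxStmt15

lemma mass_le_card {m n : ℕ} (A : Fin m → Fin n → Bool) : mass A ≤ m * n := by
  have h := Finset.card_filter_le (Finset.univ : Finset (Fin m × Fin n))
      (fun p => A p.1 p.2 = true)
  simpa [mass, Finset.card_univ] using h

lemma mass_le_mP {k l N : ℕ} (P : Fin k → Fin l → Bool) (A : Fin N → Fin N → Bool)
    (h : ¬ IntervalMinor P A) : mass A ≤ mP N P := by
  apply le_csSup
  · refine ⟨N * N, ?_⟩
    rintro x ⟨B, -, rfl⟩
    exact mass_le_card B
  · exact ⟨A, h, rfl⟩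

lemma minor_trans {k l m' n' m n : ℕ} {P : Fin k → Fin l → Bool}
    {C : Fin m' → Fin n' → Bool} {A : Fin m → Fin n → Bool}
    (lo hi : Fin m' → Fin m) (lo' hi' : Fin n' → Fin n)
    (h1 : ∀ a, lo a ≤ hi a) (h2 : ∀ a b, a < b → hi a < lo b)
    (h3 : ∀ a, lo' a ≤ hi' a) (h4 : ∀ a b, a < b → hi' a < lo' b)
    (hC : ∀ u v, C u v = true →
      ∃ i j, lo u ≤ i ∧ i ≤ hi u ∧ lo' v ≤ j ∧ j ≤ hi' v ∧ A i j = true)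
    (hm : IntervalMinor P C) : IntervalMinor P A := by
  have lomono : ∀ a b : Fin m', a ≤ b → lo a ≤ lo b := by
    intro a b hab
    rcases eq_or_lt_of_le hab with h | h
    · exact le_of_eq (by rw [h])
    · exact le_of_lt (lt_of_le_of_lt (h1 a) (h2 a b h))
  have himono : ∀ a b : Fin m', a ≤ b → hi a ≤ hi b := by
    intro a b hab
    rcases eq_or_lt_of_le hab with h | h
    · exact le_of_eq (by rw [h])
    · exact le_of_lt (lt_of_lt_of_le (h2 a b h) (h1 b))
  have lomono' : ∀ a b : Fin n', a ≤ b → lo' a ≤ lo' b := by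
    intro a b hab
    rcases eq_or_lt_of_le hab with h | h
    · exact le_of_eq (by rw [h])
    · exact le_of_lt (lt_of_le_of_lt (h3 a) (h4 a b h))
  have himono' : ∀ a b : Fin n', a ≤ b → hi' a ≤ hi' b := by
    intro a b hab
    rcases eq_or_lt_of_le hab with h | h
    · exact le_of_eq (by rw [h])
    · exact le_of_lt (lt_of_lt_of_le (h4 a b h) (h3 b))
  obtain ⟨rlo, rhi, clo, chi, H1, H2, H3, H4, H5⟩ := hm
  refine ⟨fun a => lo (rlo a), fun a => hi (rhi a), fun b => lo' (clo b), fun b => hi' (chi b),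
    ?_, ?_, ?_, ?_, ?_⟩
  · intro a; exact le_trans (lomono _ _ (H1 a)) (h1 _)
  · intro a b hab; exact h2 _ _ (H2 a b hab)
  · intro b; exact le_trans (lomono' _ _ (H3 b)) (h3 _)
  · intro a b hab; exact h4 _ _ (H4 a b hab)
  · intro a b hP
    obtain ⟨u, v, hu1, hu2, hv1, hv2, hCuv⟩ := H5 a b hP
    obtain ⟨i, j, hi1, hi2, hj1, hj2, hA⟩ := hC u v hCuv
    exact ⟨i, j, le_trans (lomono _ _ hu1) hi1, le_trans hi2 (himono _ _ hu2),
      le_trans (lomono' _ _ hv1) hj1, le_trans hj2 (himono' _ _ hv2), hA⟩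

def idx {t n : ℕ} (u : Fin n) (i : Fin t) : Fin (t * n) :=
  ⟨u.1 * t + i.1, by
    have hu : u.1 + 1 ≤ n := u.2
    have hi := i.2
    calc u.1 * t + i.1 < u.1 * t + t := by omega
      _ = (u.1 + 1) * t := by ring
      _ ≤ n * t := mul_le_mul_left hu t
      _ = t * n := Nat.mul_comm n t⟩

lemma idx_le_idx {t n : ℕ} (u : Fin n) {i j : Fin t} (h : i ≤ j) : idx u i ≤ idx u j := by
  have := Fin.le_def.mp h
  simp only [idx, Fin.le_def]
  omega

lemma idx_lt_idx_snd {t n : ℕ} (u : Fin n) {i j : Fin t} (h : i < j) : idx u i < idx u j := by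
  have := Fin.lt_def.mp h
  simp only [idx, Fin.lt_def]
  omega

lemma idx_lt_idx {t n : ℕ} {u u' : Fin n} (h : u < u') (i i' : Fin t) :
    idx u i < idx u' i' := by
  have hu : u.1 + 1 ≤ u'.1 := Fin.lt_def.mp h
  have h1 : (u.1 + 1) * t ≤ u'.1 * t := mul_le_mul_left hu t
  have h2 : (u.1 + 1) * t = u.1 * t + t := by ring
  have hi := i.2
  simp only [idx, Fin.lt_def]
  have h3 : i'.1 ≥ 0 := Nat.zero_le _
  linarith

def blkEquiv (t n : ℕ) (ht : 0 < t) : Fin n × Fin t ≃ Fin (t * n) where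
  toFun p := idx p.1 p.2
  invFun q := (⟨q.1 / t, by
      have hq := q.2
      exact (Nat.div_lt_iff_lt_mul ht).mpr (lt_of_lt_of_eq hq (Nat.mul_comm t n))⟩,
    ⟨q.1 % t, Nat.mod_lt _ ht⟩)
  left_inv := by
    rintro ⟨u, i⟩
    have hi := i.2
    simp only [idx]
    ext
    · simp only
      rw [show u.1 * t + i.1 = i.1 + t * u.1 by ring, Nat.add_mul_div_left _ _ ht,
        Nat.div_eq_of_lt hi, Nat.zero_add]
    · simp only
      rw [show u.1 * t + i.1 = i.1 + t * u.1 by ring, Nat.add_mul_mod_self_left,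
        Nat.mod_eq_of_lt hi]
  right_inv := by
    intro q
    simp only [idx]
    ext
    simp only
    rw [Nat.mul_comm]
    exact Nat.div_add_mod q.1 t

end AuxStmt15
section AuxStmt15b

def Blk {t n : ℕ} (A : Fin (t * n) → Fin (t * n) → Bool) (u v : Fin n) :
    Fin t → Fin t → Bool :=
  fun i j => A (idx u i) (idx v j)

lemma mass_eq_sum_blk {t n : ℕ} (ht : 0 < t) (A : Fin (t * n) → Fin (t * n) → Bool) :
    mass A = ∑ p : Fin n × Fin n, mass (Blk A p.1 p.2) := by
  classical
  let e := blkEquiv t n ht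
  have key : (∑ q : Fin (t * n) × Fin (t * n), if A q.1 q.2 = true then 1 else 0) =
      ∑ x : (Fin n × Fin t) × (Fin n × Fin t),
        (if A (idx x.1.1 x.1.2) (idx x.2.1 x.2.2) = true then 1 else 0) := by
    refine (Fintype.sum_equiv (Equiv.prodCongr e e)
      (fun x => if A (idx x.1.1 x.1.2) (idx x.2.1 x.2.2) = true then 1 else 0)
      (fun q => if A q.1 q.2 = true then 1 else 0) (fun x => ?_)).symm
    rcases x with ⟨⟨u, i⟩, ⟨v, j⟩⟩
    simp [e, blkEquiv, Equiv.prodCongr_apply, Prod.map]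
  have lhs : mass A = ∑ x : (Fin n × Fin t) × (Fin n × Fin t),
      (if A (idx x.1.1 x.1.2) (idx x.2.1 x.2.2) = true then 1 else 0) := by
    rw [mass, Finset.card_filter]
    exact key
  rw [lhs]
  simp only [Fintype.sum_prod_type, mass, Finset.card_filter, Blk]
  refine Finset.sum_congr rfl fun u _ => ?_
  rw [Finset.sum_comm]
  refine Finset.sum_congr rfl fun v _ => ?_
  exact ((Finset.card_filter (p := fun q : Fin t × Fin t => A (idx u q.1) (idx v q.2) = true)
    (s := Finset.univ)).trans (Fintype.sum_prod_type _)).symm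

end AuxStmt15b
section AuxStmt15c

def neRows {t n : ℕ} (A : Fin (t * n) → Fin (t * n) → Bool) (u v : Fin n) : Finset (Fin t) :=
  Finset.univ.filter (fun i => ∃ j, Blk A u v i j = true)

def neCols {t n : ℕ} (A : Fin (t * n) → Fin (t * n) → Bool) (u v : Fin n) : Finset (Fin t) :=
  Finset.univ.filter (fun j => ∃ i, Blk A u v i j = true)

lemma fin_zero_le' {t : ℕ} (ht : 0 < t) (i : Fin t) : (⟨0, ht⟩ : Fin t) ≤ i := by
  simp [Fin.le_def]

lemma fin_le_last' {t : ℕ} (ht : 0 < t) (i : Fin t) : i ≤ (⟨t - 1, by omega⟩ : Fin t) := by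
  have := i.2
  simp only [Fin.le_def]
  omega

lemma small_block_mass {kk ll t n s : ℕ} {P : Fin kk → Fin ll → Bool}
    (hst : s ≤ t)
    {A : Fin (t * n) → Fin (t * n) → Bool} {u v : Fin n}
    (hBlk : ¬ IntervalMinor P (Blk A u v))
    (hR : (neRows A u v).card ≤ s - 1) (hC : (neCols A u v).card ≤ s - 1) :
    mass (Blk A u v) ≤ mP (s - 1) P := by
  classical
  obtain ⟨R', hRsub, -, hRcard⟩ := Finset.exists_subsuperset_card_eq
    (Finset.subset_univ (neRows A u v)) hR
    (by simp only [Finset.card_univ, Fintype.card_fin]; omega)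
  obtain ⟨C', hCsub, -, hCcard⟩ := Finset.exists_subsuperset_card_eq
    (Finset.subset_univ (neCols A u v)) hC
    (by simp only [Finset.card_univ, Fintype.card_fin]; omega)
  let eR := R'.orderEmbOfFin hRcard
  let eC := C'.orderEmbOfFin hCcard
  have havoid : ¬ IntervalMinor P (fun a b => Blk A u v (eR a) (eC b)) := by
    intro h
    exact hBlk (minor_trans (fun a => eR a) (fun a => eR a) (fun b => eC b) (fun b => eC b)
      (fun a => le_refl _) (fun a b hab => eR.strictMono hab)
      (fun a => le_refl _) (fun a b hab => eC.strictMono hab)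
      (fun a b hab => ⟨eR a, eC b, le_refl _, le_refl _, le_refl _, le_refl _, hab⟩) h)
  have hmass : mass (fun a b => Blk A u v (eR a) (eC b)) = mass (Blk A u v) := by
    rw [mass, mass]
    apply Finset.card_bij (fun p _ => (eR p.1, eC p.2))
    · intro p hp
      simp only [Finset.mem_filter, Finset.mem_univ, true_and] at hp ⊢
      exact hp
    · intro p hp q hq hpq
      have h1 : eR p.1 = eR q.1 := congrArg Prod.fst hpq
      have h2 : eC p.2 = eC q.2 := congrArg Prod.snd hpq
      exact Prod.ext (eR.injective h1) (eC.injective h2)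
    · intro q hq
      simp only [Finset.mem_filter, Finset.mem_univ, true_and] at hq
      have hq1 : q.1 ∈ R' := hRsub (by
        simp only [neRows, Finset.mem_filter, Finset.mem_univ, true_and]
        exact ⟨q.2, hq⟩)
      have hq2 : q.2 ∈ C' := hCsub (by
        simp only [neCols, Finset.mem_filter, Finset.mem_univ, true_and]
        exact ⟨q.1, hq⟩)
      have hr1 : q.1 ∈ Set.range eR := by
        rw [Finset.range_orderEmbOfFin]
        exact hq1
      have hr2 : q.2 ∈ Set.range eC := by
        rw [Finset.range_orderEmbOfFin]
        exact hq2
      obtain ⟨a, ha⟩ := hr1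
      obtain ⟨b, hb⟩ := hr2
      refine ⟨(a, b), ?_, ?_⟩
      · simp only [Finset.mem_filter, Finset.mem_univ, true_and, ha, hb]
        exact hq
      · simp [ha, hb]
  calc mass (Blk A u v) = mass (fun a b => Blk A u v (eR a) (eC b)) := hmass.symm
    _ ≤ mP (s - 1) P := mass_le_mP P _ havoid

lemma wide_count {kk ll t n s : ℕ} {P : Fin kk → Fin ll → Bool}
    (hs : 0 < s) (hst : s ≤ t)
    {A : Fin (t * n) → Fin (t * n) → Bool} (hA : ¬ IntervalMinor P A) (v : Fin n) :
    ((Finset.univ.filter fun u : Fin n => s ≤ (neCols A u v).card).card : ℕ∞) ≤ fP P t s := by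
  classical
  have ht : 0 < t := lt_of_lt_of_le hs hst
  set W := Finset.univ.filter fun u : Fin n => s ≤ (neCols A u v).card with hW
  let eW := W.orderEmbOfFin rfl
  set M : Fin W.card → Fin t → Bool :=
    fun w j => decide (∃ i, Blk A (eW w) v i j = true) with hM
  apply le_sSup
  refine ⟨W.card, rfl, M, ?_, ?_⟩
  · intro w
    have hmem : eW w ∈ W := W.orderEmbOfFin_mem rfl w
    have hmem2 := (Finset.mem_filter.mp hmem).2
    refine le_trans hmem2 (Finset.card_le_card ?_)
    intro j hj
    simp only [neCols, Finset.mem_filter, Finset.mem_univ, true_and] at hj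
    simp only [Finset.mem_filter, Finset.mem_univ, true_and, hM, decide_eq_true_eq]
    exact hj
  · intro h
    apply hA
    refine minor_trans (fun w => idx (eW w) ⟨0, ht⟩) (fun w => idx (eW w) ⟨t - 1, by omega⟩)
      (fun j => idx v j) (fun j => idx v j)
      (fun w => idx_le_idx _ (fin_le_last' ht _))
      (fun a b hab => idx_lt_idx (eW.strictMono hab) _ _)
      (fun j => le_refl _) (fun a b hab => idx_lt_idx_snd v hab)
      ?_ h
    intro w j hMwj
    rw [hM] at hMwj
    simp only [decide_eq_true_eq] at hMwj
    obtain ⟨i, hi⟩ := hMwj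
    exact ⟨idx (eW w) i, idx v j, idx_le_idx _ (fin_zero_le' ht i),
      idx_le_idx _ (fin_le_last' ht i), le_refl _, le_refl _, hi⟩

lemma tall_count {kk ll t n s : ℕ} {P : Fin kk → Fin ll → Bool}
    (hs : 0 < s) (hst : s ≤ t)
    {A : Fin (t * n) → Fin (t * n) → Bool} (hA : ¬ IntervalMinor P A) (u : Fin n) :
    ((Finset.univ.filter fun v : Fin n => s ≤ (neRows A u v).card).card : ℕ∞) ≤ gP P t s := by
  classical
  have ht : 0 < t := lt_of_lt_of_le hs hst
  set W := Finset.univ.filter fun v : Fin n => s ≤ (neRows A u v).card with hW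
  let eW := W.orderEmbOfFin rfl
  set M : Fin t → Fin W.card → Bool :=
    fun i w => decide (∃ j, Blk A u (eW w) i j = true) with hM
  apply le_sSup
  refine ⟨W.card, rfl, M, ?_, ?_⟩
  · intro w
    have hmem : eW w ∈ W := W.orderEmbOfFin_mem rfl w
    have hmem2 := (Finset.mem_filter.mp hmem).2
    refine le_trans hmem2 (Finset.card_le_card ?_)
    intro i hi
    simp only [neRows, Finset.mem_filter, Finset.mem_univ, true_and] at hi
    simp only [Finset.mem_filter, Finset.mem_univ, true_and, hM, decide_eq_true_eq]
    exact hi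
  · intro h
    apply hA
    refine minor_trans (fun i => idx u i) (fun i => idx u i)
      (fun w => idx (eW w) ⟨0, ht⟩) (fun w => idx (eW w) ⟨t - 1, by omega⟩)
      (fun i => le_refl _) (fun a b hab => idx_lt_idx_snd u hab)
      (fun w => idx_le_idx _ (fin_le_last' ht _))
      (fun a b hab => idx_lt_idx (eW.strictMono hab) _ _)
      ?_ h
    intro i w hMiw
    rw [hM] at hMiw
    simp only [decide_eq_true_eq] at hMiw
    obtain ⟨j, hj⟩ := hMiw
    exact ⟨idx u i, idx (eW w) j, le_refl _, le_refl _,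
      idx_le_idx _ (fin_zero_le' ht j), idx_le_idx _ (fin_le_last' ht j), hj⟩

lemma small_count {kk ll t n s : ℕ} {P : Fin kk → Fin ll → Bool}
    (hs : 0 < s) (hst : s ≤ t)
    {A : Fin (t * n) → Fin (t * n) → Bool} (hA : ¬ IntervalMinor P A) :
    ((Finset.univ.filter fun p : Fin n × Fin n =>
        mass (Blk A p.1 p.2) ≠ 0 ∧ ¬ s ≤ (neCols A p.1 p.2).card ∧
          ¬ s ≤ (neRows A p.1 p.2).card).card) ≤ mP n P := by
  classical
  have ht : 0 < t := lt_of_lt_of_le hs hst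
  set B0 : Fin n → Fin n → Bool := fun u v => decide (mass (Blk A u v) ≠ 0 ∧
    ¬ s ≤ (neCols A u v).card ∧ ¬ s ≤ (neRows A u v).card) with hB0
  have hcard : (Finset.univ.filter fun p : Fin n × Fin n =>
        mass (Blk A p.1 p.2) ≠ 0 ∧ ¬ s ≤ (neCols A p.1 p.2).card ∧
          ¬ s ≤ (neRows A p.1 p.2).card)
      = (Finset.univ.filter fun p : Fin n × Fin n => B0 p.1 p.2 = true) := by
    apply Finset.filter_congr
    intro p _
    simp [hB0]
  rw [hcard]
  have havoid : ¬ IntervalMinor P B0 := by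
    intro h
    apply hA
    refine minor_trans (fun u => idx u ⟨0, ht⟩) (fun u => idx u ⟨t - 1, by omega⟩)
      (fun v => idx v ⟨0, ht⟩) (fun v => idx v ⟨t - 1, by omega⟩)
      (fun u => idx_le_idx _ (fin_le_last' ht _))
      (fun a b hab => idx_lt_idx hab _ _)
      (fun v => idx_le_idx _ (fin_le_last' ht _))
      (fun a b hab => idx_lt_idx hab _ _)
      ?_ h
    intro u v huv
    rw [hB0] at huv
    simp only [decide_eq_true_eq] at huv
    have hne : (Finset.univ.filter fun q : Fin t × Fin t =>
        Blk A u v q.1 q.2 = true).Nonempty := by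
      rw [← Finset.card_pos]
      have h0 := huv.1
      rw [mass] at h0
      omega
    obtain ⟨q, hq⟩ := hne
    rw [Finset.mem_filter] at hq
    exact ⟨idx u q.1, idx v q.2, idx_le_idx _ (fin_zero_le' ht _),
      idx_le_idx _ (fin_le_last' ht _), idx_le_idx _ (fin_zero_le' ht _),
      idx_le_idx _ (fin_le_last' ht _), hq.2⟩
  exact mass_le_mP P B0 havoid

end AuxStmt15c
section AuxStmt15d

lemma core_stmt15 {kk ll : ℕ} (P : Fin kk → Fin ll → Bool) (n s t : ℕ)
    (hs : 0 < s) (hst : s ≤ t)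
    (A : Fin (t * n) → Fin (t * n) → Bool) (hA : ¬ IntervalMinor P A) :
    (mass A : ℕ∞) ≤
      (mP (s - 1) P : ℕ∞) * (mP n P : ℕ∞) +
        (mP t P : ℕ∞) * fP P t s * (n : ℕ∞) +
        (mP t P : ℕ∞) * gP P t s * (n : ℕ∞) := by
  classical
  have ht : 0 < t := lt_of_lt_of_le hs hst
  have hBlk : ∀ u v : Fin n, ¬ IntervalMinor P (Blk A u v) := by
    intro u v h
    exact hA (minor_trans (fun i => idx u i) (fun i => idx u i)
      (fun j => idx v j) (fun j => idx v j)
      (fun a => le_refl _) (fun a b hab => idx_lt_idx_snd u hab)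
      (fun a => le_refl _) (fun a b hab => idx_lt_idx_snd v hab)
      (fun i j hij => ⟨idx u i, idx v j, le_refl _, le_refl _, le_refl _, le_refl _, hij⟩) h)
  set f : Fin n × Fin n → ℕ := fun p => mass (Blk A p.1 p.2) with hf
  set SW := Finset.univ.filter (fun p : Fin n × Fin n => s ≤ (neCols A p.1 p.2).card) with hSW
  set rest := Finset.univ.filter
    (fun p : Fin n × Fin n => ¬ s ≤ (neCols A p.1 p.2).card) with hrest
  have hsplit1 : ∑ p, f p = (∑ p ∈ SW, f p) + ∑ p ∈ rest, f p :=
    (Finset.sum_filter_add_sum_filter_not _ _ f).symm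
  set ST := rest.filter (fun p => s ≤ (neRows A p.1 p.2).card) with hST
  set SS := rest.filter (fun p => ¬ s ≤ (neRows A p.1 p.2).card) with hSS
  have hsplit2 : ∑ p ∈ rest, f p = (∑ p ∈ ST, f p) + ∑ p ∈ SS, f p :=
    (Finset.sum_filter_add_sum_filter_not _ _ f).symm
  -- bound on the small part
  have hSSbound : (∑ p ∈ SS, f p) ≤ mP n P * mP (s - 1) P := by
    rw [← Finset.sum_filter_ne_zero]
    have h1 : ∀ p ∈ SS.filter (fun p => f p ≠ 0), f p ≤ mP (s - 1) P := by
      intro p hp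
      simp only [hSS, hrest, Finset.filter_filter, Finset.mem_filter, Finset.mem_univ,
        true_and] at hp
      exact small_block_mass hst (hBlk p.1 p.2) (by omega) (by omega)
    have hset : SS.filter (fun p => f p ≠ 0) =
        Finset.univ.filter (fun p : Fin n × Fin n =>
          mass (Blk A p.1 p.2) ≠ 0 ∧ ¬ s ≤ (neCols A p.1 p.2).card ∧
            ¬ s ≤ (neRows A p.1 p.2).card) := by
      rw [hSS, hrest, Finset.filter_filter, Finset.filter_filter]
      apply Finset.filter_congr
      intro p _
      simp only [hf]
      tauto
    have hcount : (SS.filter (fun p => f p ≠ 0)).card ≤ mP n P := by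
      rw [hset]
      exact small_count hs hst hA
    calc ∑ p ∈ SS.filter (fun p => f p ≠ 0), f p
        ≤ (SS.filter (fun p => f p ≠ 0)).card • (mP (s - 1) P) :=
          Finset.sum_le_card_nsmul _ _ _ h1
      _ = (SS.filter (fun p => f p ≠ 0)).card * (mP (s - 1) P) := smul_eq_mul _ _
      _ ≤ mP n P * mP (s - 1) P := mul_le_mul_left hcount _
  -- bound on the wide part
  have hSWcard : ((SW.card : ℕ∞)) ≤ fP P t s * n := by
    have hc : SW.card = ∑ v : Fin n,
        (Finset.univ.filter fun u : Fin n => s ≤ (neCols A u v).card).card := by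
      rw [hSW, Finset.card_filter, Fintype.sum_prod_type, Finset.sum_comm]
      refine Finset.sum_congr rfl fun v _ => ?_
      rw [Finset.card_filter]
    rw [hc]
    push_cast
    calc (∑ v : Fin n,
          ((Finset.univ.filter fun u : Fin n => s ≤ (neCols A u v).card).card : ℕ∞))
        ≤ ∑ _v : Fin n, fP P t s := Finset.sum_le_sum (fun v _ => wide_count hs hst hA v)
      _ = (Finset.univ : Finset (Fin n)).card • fP P t s := Finset.sum_const _
      _ = fP P t s * n := by
          simp only [Finset.card_univ, Fintype.card_fin, nsmul_eq_mul]
          ring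
  have hSWsum : ((∑ p ∈ SW, f p : ℕ) : ℕ∞) ≤ (mP t P : ℕ∞) * fP P t s * n := by
    have h1 : (∑ p ∈ SW, f p) ≤ SW.card * mP t P := by
      calc ∑ p ∈ SW, f p ≤ SW.card • mP t P :=
            Finset.sum_le_card_nsmul _ _ _ (fun p _ => mass_le_mP P _ (hBlk p.1 p.2))
        _ = SW.card * mP t P := smul_eq_mul _ _
    calc ((∑ p ∈ SW, f p : ℕ) : ℕ∞) ≤ ((SW.card * mP t P : ℕ) : ℕ∞) := by exact_mod_cast h1
      _ = (SW.card : ℕ∞) * (mP t P : ℕ∞) := by push_cast; ring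
      _ ≤ (fP P t s * n) * (mP t P : ℕ∞) := mul_le_mul_left hSWcard _
      _ = (mP t P : ℕ∞) * fP P t s * n := by ring
  -- bound on the tall part
  have hSTcard : ((ST.card : ℕ∞)) ≤ gP P t s * n := by
    have hsub : ST ⊆ Finset.univ.filter
        (fun p : Fin n × Fin n => s ≤ (neRows A p.1 p.2).card) := by
      rw [hST]
      exact Finset.filter_subset_filter _ (Finset.filter_subset _ _)
    have hle := Finset.card_le_card hsub
    have hc : (Finset.univ.filter
        (fun p : Fin n × Fin n => s ≤ (neRows A p.1 p.2).card)).card = ∑ u : Fin n,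
        (Finset.univ.filter fun v : Fin n => s ≤ (neRows A u v).card).card := by
      rw [Finset.card_filter, Fintype.sum_prod_type]
      refine Finset.sum_congr rfl fun u _ => ?_
      rw [Finset.card_filter]
    rw [hc] at hle
    calc ((ST.card : ℕ∞)) ≤ ((∑ u : Fin n,
          (Finset.univ.filter fun v : Fin n => s ≤ (neRows A u v).card).card : ℕ) : ℕ∞) := by
          exact_mod_cast hle
      _ = ∑ u : Fin n,
          ((Finset.univ.filter fun v : Fin n => s ≤ (neRows A u v).card).card : ℕ∞) := by
          push_cast; rfl
      _ ≤ ∑ _u : Fin n, gP P t s := Finset.sum_le_sum (fun u _ => tall_count hs hst hA u)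
      _ = (Finset.univ : Finset (Fin n)).card • gP P t s := Finset.sum_const _
      _ = gP P t s * n := by
          simp only [Finset.card_univ, Fintype.card_fin, nsmul_eq_mul]
          ring
  have hSTsum : ((∑ p ∈ ST, f p : ℕ) : ℕ∞) ≤ (mP t P : ℕ∞) * gP P t s * n := by
    have h1 : (∑ p ∈ ST, f p) ≤ ST.card * mP t P := by
      calc ∑ p ∈ ST, f p ≤ ST.card • mP t P :=
            Finset.sum_le_card_nsmul _ _ _ (fun p _ => mass_le_mP P _ (hBlk p.1 p.2))
        _ = ST.card * mP t P := smul_eq_mul _ _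
    calc ((∑ p ∈ ST, f p : ℕ) : ℕ∞) ≤ ((ST.card * mP t P : ℕ) : ℕ∞) := by exact_mod_cast h1
      _ = (ST.card : ℕ∞) * (mP t P : ℕ∞) := by push_cast; ring
      _ ≤ (gP P t s * n) * (mP t P : ℕ∞) := mul_le_mul_left hSTcard _
      _ = (mP t P : ℕ∞) * gP P t s * n := by ring
  have hSSsum : ((∑ p ∈ SS, f p : ℕ) : ℕ∞) ≤ (mP (s - 1) P : ℕ∞) * (mP n P : ℕ∞) := by
    calc ((∑ p ∈ SS, f p : ℕ) : ℕ∞) ≤ ((mP n P * mP (s - 1) P : ℕ) : ℕ∞) := by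
          exact_mod_cast hSSbound
      _ = (mP (s - 1) P : ℕ∞) * (mP n P : ℕ∞) := by push_cast; ring
  calc ((mass A : ℕ∞))
      = ((∑ p ∈ SW, f p : ℕ) : ℕ∞) + ((∑ p ∈ ST, f p : ℕ) : ℕ∞) +
        ((∑ p ∈ SS, f p : ℕ) : ℕ∞) := by
        rw [mass_eq_sum_blk ht A]
        rw [show (∑ p : Fin n × Fin n, mass (Blk A p.1 p.2)) = ∑ p, f p from rfl]
        rw [hsplit1, hsplit2]
        push_cast
        ring
    _ ≤ (mP t P : ℕ∞) * fP P t s * n + (mP t P : ℕ∞) * gP P t s * n +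
        (mP (s - 1) P : ℕ∞) * (mP n P : ℕ∞) :=
        add_le_add (add_le_add hSWsum hSTsum) hSSsum
    _ = (mP (s - 1) P : ℕ∞) * (mP n P : ℕ∞) +
        (mP t P : ℕ∞) * fP P t s * (n : ℕ∞) +
        (mP t P : ℕ∞) * gP P t s * (n : ℕ∞) := by ring

end AuxStmt15d
/-- For every binary matrix `P` and all positive integers
`n, s, t` with `s ≤ t`,
`m(tn,P) ≤ m(s−1,P)·m(n,P) + m(t,P)·f_P(t,s)·n + m(t,P)·g_P(t,s)·n`
as an inequality of extended natural numbers. -/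
theorem stmt15 {kk ll : ℕ} (P : Fin kk → Fin ll → Bool) (n s t : ℕ)
    (hn : 0 < n) (hs : 0 < s) (hst : s ≤ t) :
    (mP (t * n) P : ℕ∞) ≤
      (mP (s - 1) P : ℕ∞) * (mP n P : ℕ∞) +
        (mP t P : ℕ∞) * fP P t s * (n : ℕ∞) +
        (mP t P : ℕ∞) * gP P t s * (n : ℕ∞) := by
  classical
  set S : Set ℕ := {m | ∃ A : Fin (t * n) → Fin (t * n) → Bool,
    ¬ IntervalMinor P A ∧ mass A = m} with hS
  have hmPdef : mP (t * n) P = sSup S := rfl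
  rcases Set.eq_empty_or_nonempty S with h | h
  · have h0 : mP (t * n) P = 0 := by
      rw [hmPdef, h]
      exact csSup_empty
    rw [h0]
    simp
  · have hb : BddAbove S := by
      refine ⟨(t * n) * (t * n), ?_⟩
      rintro x ⟨B, -, rfl⟩
      exact mass_le_card B
    obtain ⟨A, hA, hm⟩ := Nat.sSup_mem h hb
    have heq : mP (t * n) P = mass A := by rw [hmPdef, ← hm]
    rw [heq]
    exact core_stmt15 P n s t hs hst A hA
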